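/- Let A be a symmetric positive definite n×n real matrix with extreme eigenvalues μ_min, μ_max, let τ = ‖B‖₂ for an n×n real matrix B, and set Ω = ωI with ω > 0. If τ < μ_min and ω > (μ_max - μ_min)/2 + τ, then ‖(A + ωI)^{-1}‖₂ (‖ωI - A‖₂ + 2‖B‖₂) < 1, and hence the NMN iteration (ωI + A) x^(k+1) = (ωI - A) x^(k) + 2(B |x^(k)| + b) converges linearly from any initial vector to any solution x* of A x - B |x| = b. -/

import Mathlib

open Matrix Filter

noncomputable def spec {n : ℕ} (A : Matrix (Fin n) (Fin n) ℝ) : ℝ :=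
  ‖Matrix.toEuclideanCLM (𝕜 := ℝ) A‖

noncomputable def enorm2 {n : ℕ} (x : Fin n → ℝ) : ℝ :=
  ‖(WithLp.equiv 2 (Fin n → ℝ)).symm x‖

def vabs {n : ℕ} (x : Fin n → ℝ) : Fin n → ℝ := fun i => |x i|

def entAbs {n : ℕ} (A : Matrix (Fin n) (Fin n) ℝ) : Matrix (Fin n) (Fin n) ℝ :=
  fun i j => |A i j|

def compMat {n : ℕ} (A : Matrix (Fin n) (Fin n) ℝ) : Matrix (Fin n) (Fin n) ℝ :=
  fun i j => if i = j then |A i j| else -|A i j|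

noncomputable def specRad {n : ℕ} (A : Matrix (Fin n) (Fin n) ℝ) : ENNReal :=
  spectralRadius ℂ (A.map Complex.ofReal)

open scoped Matrix.Norms.L2Operator

set_option maxHeartbeats 1000000
set_option synthInstance.maxHeartbeats 400000

lemma spec_eq_norm {n : ℕ} (A : Matrix (Fin n) (Fin n) ℝ) : spec A = ‖A‖ := rfl

lemma spec_nonneg {n : ℕ} (A : Matrix (Fin n) (Fin n) ℝ) : 0 ≤ spec A := by
  rw [spec_eq_norm]; exact norm_nonneg A

lemma enorm2_nonneg {n : ℕ} (x : Fin n → ℝ) : 0 ≤ enorm2 x := norm_nonneg _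

lemma enorm2_mulVec_le {n : ℕ} (A : Matrix (Fin n) (Fin n) ℝ) (v : Fin n → ℝ) :
    enorm2 (A.mulVec v) ≤ spec A * enorm2 v := by
  have := ContinuousLinearMap.le_opNorm (Matrix.toEuclideanCLM (𝕜 := ℝ) A)
    ((WithLp.equiv 2 (Fin n → ℝ)).symm v)
  rw [WithLp.equiv_symm_apply, Matrix.toEuclideanCLM_toLp] at this
  exact this

lemma spec_le_of_bound {n : ℕ} {A : Matrix (Fin n) (Fin n) ℝ} {r : ℝ} (hr : 0 ≤ r)
    (h : ∀ v : Fin n → ℝ, enorm2 (A.mulVec v) ≤ r * enorm2 v) : spec A ≤ r := by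
  refine ContinuousLinearMap.opNorm_le_bound _ hr fun x => ?_
  have := h (WithLp.equiv 2 (Fin n → ℝ) x)
  unfold enorm2 at this
  rw [Equiv.symm_apply_apply] at this
  have e : Matrix.toEuclideanCLM (𝕜 := ℝ) A x =
      (WithLp.equiv 2 (Fin n → ℝ)).symm (A.mulVec (WithLp.equiv 2 (Fin n → ℝ) x)) := by
    conv_lhs => rw [← Equiv.symm_apply_apply (WithLp.equiv 2 (Fin n → ℝ)) x]
    rw [WithLp.equiv_symm_apply, Matrix.toEuclideanCLM_toLp]
  rw [e]; exact this

lemma spec_one' {n : ℕ} (hn : 0 < n) : spec (1 : Matrix (Fin n) (Fin n) ℝ) = 1 := by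
  haveI : Nonempty (Fin n) := ⟨⟨0, hn⟩⟩
  haveI : Nontrivial (EuclideanSpace ℝ (Fin n)) := (WithLp.equiv 2 (Fin n → ℝ)).nontrivial
  have : Matrix.toEuclideanCLM (𝕜 := ℝ) (1 : Matrix (Fin n) (Fin n) ℝ) =
      (1 : EuclideanSpace ℝ (Fin n) →L[ℝ] EuclideanSpace ℝ (Fin n)) := _root_.map_one _
  rw [spec, this]
  exact ContinuousLinearMap.norm_id

lemma spec_unitary {n : ℕ} (hn : 0 < n) {U : Matrix (Fin n) (Fin n) ℝ}
    (hU : U ∈ Matrix.unitaryGroup (Fin n) ℝ) : spec U = 1 := by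
  have h1 : Uᴴ * U = 1 := by
    have := (Matrix.mem_unitaryGroup_iff'.mp hU)
    rwa [Matrix.star_eq_conjTranspose] at this
  have h2 := Matrix.l2_opNorm_conjTranspose_mul_self U
  rw [h1] at h2
  rw [← spec_eq_norm, ← spec_eq_norm, spec_one' hn] at h2
  rcases mul_self_eq_one_iff.mp h2.symm with h | h
  · exact h
  · exfalso; have := spec_eq_norm U ▸ norm_nonneg U; linarith [this]

lemma enorm2_mono {n : ℕ} {u v : Fin n → ℝ} (h : ∀ i, |u i| ≤ |v i|) :
    enorm2 u ≤ enorm2 v := by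
  simp only [enorm2, EuclideanSpace.norm_eq]
  apply Real.sqrt_le_sqrt
  apply Finset.sum_le_sum
  intro i _
  have : ‖u i‖ ≤ ‖v i‖ := by simpa [Real.norm_eq_abs] using h i
  exact pow_le_pow_left₀ (norm_nonneg _) this 2

lemma enorm2_smul {n : ℕ} (c : ℝ) (v : Fin n → ℝ) : enorm2 (c • v) = |c| * enorm2 v := by
  simp only [enorm2, WithLp.equiv_symm_apply, WithLp.toLp_smul]
  rw [norm_smul, Real.norm_eq_abs]

lemma enorm2_add_le {n : ℕ} (u v : Fin n → ℝ) : enorm2 (u + v) ≤ enorm2 u + enorm2 v := by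
  simp only [enorm2, WithLp.equiv_symm_apply, WithLp.toLp_add]
  exact norm_add_le _ _

lemma spec_diagonal_le {n : ℕ} {d : Fin n → ℝ} {r : ℝ} (hr : 0 ≤ r)
    (h : ∀ i, |d i| ≤ r) : spec (Matrix.diagonal d) ≤ r := by
  apply spec_le_of_bound hr
  intro v
  calc enorm2 ((Matrix.diagonal d).mulVec v) ≤ enorm2 (r • v) := by
        apply enorm2_mono
        intro i
        rw [Matrix.mulVec_diagonal]
        simp only [Pi.smul_apply, smul_eq_mul, abs_mul]
        exact mul_le_mul_of_nonneg_right (by simpa [abs_of_nonneg hr] using h i) (abs_nonneg _)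
    _ = r * enorm2 v := by rw [enorm2_smul, abs_of_nonneg hr]

lemma spec_conj_le {n : ℕ} (hn : 0 < n) {U : Matrix (Fin n) (Fin n) ℝ}
    (hU : U ∈ Matrix.unitaryGroup (Fin n) ℝ) {d : Fin n → ℝ} {r : ℝ} (hr : 0 ≤ r)
    (h : ∀ i, |d i| ≤ r) : spec (U * Matrix.diagonal d * star U) ≤ r := by
  have h1 : spec (U * Matrix.diagonal d * star U) ≤
      spec (U * Matrix.diagonal d) * spec (star U) := Matrix.l2_opNorm_mul _ _
  have h2 : spec (U * Matrix.diagonal d) ≤ spec U * spec (Matrix.diagonal d) :=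
    Matrix.l2_opNorm_mul _ _
  have h3 : spec (star U) = 1 := spec_unitary hn (Unitary.star_mem hU)
  have h4 := spec_diagonal_le hr h
  have h5 := spec_unitary hn hU
  calc spec (U * Matrix.diagonal d * star U) ≤ spec (U * Matrix.diagonal d) * spec (star U) := h1
    _ ≤ spec U * spec (Matrix.diagonal d) * spec (star U) := by
        rw [h3, mul_one, mul_one]; exact h2
    _ ≤ r := by rw [h3, h5, mul_one, one_mul]; exact h4

theorem stmt7 {n : ℕ} (A B : Matrix (Fin n) (Fin n) ℝ) (b : Fin n → ℝ)
    (hA : A.PosDef) (hH : A.IsHermitian) (μmin μmax : ℝ)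
    (hminmem : ∃ i, hH.eigenvalues i = μmin)
    (hmaxmem : ∃ i, hH.eigenvalues i = μmax)
    (hmin : ∀ i, μmin ≤ hH.eigenvalues i)
    (hmax : ∀ i, hH.eigenvalues i ≤ μmax)
    (ω : ℝ) (hω : 0 < ω)
    (hτ : spec B < μmin) (hωbig : (μmax - μmin) / 2 + spec B < ω) :
    spec (A + ω • (1 : Matrix (Fin n) (Fin n) ℝ))⁻¹ *
      (spec (ω • (1 : Matrix (Fin n) (Fin n) ℝ) - A) + 2 * spec B) < 1 ∧
    ∀ xs : Fin n → ℝ, A.mulVec xs - B.mulVec (vabs xs) = b →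
      ∀ x : ℕ → Fin n → ℝ,
        (∀ k, (ω • (1 : Matrix (Fin n) (Fin n) ℝ) + A).mulVec (x (k + 1)) =
          (ω • (1 : Matrix (Fin n) (Fin n) ℝ) - A).mulVec (x k) +
            (2 : ℝ) • (B.mulVec (vabs (x k)) + b)) →
        (∃ c : ℝ, c < 1 ∧ ∀ k, enorm2 (x (k + 1) - xs) ≤ c * enorm2 (x k - xs)) ∧
          Tendsto x atTop (nhds xs) := by
  obtain ⟨i0, hi0⟩ := hminmem
  have hn : 0 < n := i0.pos
  set U : Matrix (Fin n) (Fin n) ℝ := ↑(hH.eigenvectorUnitary) with hUdef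
  have hU : U ∈ Matrix.unitaryGroup (Fin n) ℝ := hH.eigenvectorUnitary.2
  set d : Fin n → ℝ := hH.eigenvalues with hddef
  have hdpos : ∀ i, 0 < d i := fun i => hA.eigenvalues_pos i
  have hμmin : 0 < μmin := hi0 ▸ hdpos i0
  have hminmax : μmin ≤ μmax := hi0 ▸ hmax i0
  have hτ0 : 0 ≤ spec B := spec_nonneg B
  have hAeq : A = U * Matrix.diagonal d * star U := by
    have := hH.spectral_theorem
    rwa [RCLike.ofReal_real_eq_id, Function.id_comp] at this
  have hUU : U * star U = 1 := Matrix.mem_unitaryGroup_iff.mp hU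
  have hUsU : star U * U = 1 := Matrix.mem_unitaryGroup_iff'.mp hU
  have hsmul : ∀ c : ℝ, c • (1 : Matrix (Fin n) (Fin n) ℝ) =
      U * Matrix.diagonal (fun _ => c) * star U := by
    intro c
    have : Matrix.diagonal (fun _ : Fin n => c) = c • (1 : Matrix (Fin n) (Fin n) ℝ) :=
      (Matrix.smul_one_eq_diagonal c).symm
    rw [this, Matrix.mul_smul, Matrix.smul_mul, mul_one, hUU]
  have hM : A + ω • (1 : Matrix (Fin n) (Fin n) ℝ) =
      U * Matrix.diagonal (fun i => d i + ω) * star U := by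
    rw [hAeq, hsmul ω, ← Matrix.add_mul, ← Matrix.mul_add, ← Matrix.diagonal_add]
  have hN : ω • (1 : Matrix (Fin n) (Fin n) ℝ) - A =
      U * Matrix.diagonal (fun i => ω - d i) * star U := by
    rw [hAeq, hsmul ω, ← Matrix.sub_mul, ← Matrix.mul_sub, ← Matrix.diagonal_sub]
  have hleft : (U * Matrix.diagonal (fun i => (d i + ω)⁻¹) * star U) *
      (A + ω • (1 : Matrix (Fin n) (Fin n) ℝ)) = 1 := by
    rw [hM]
    calc (U * Matrix.diagonal (fun i => (d i + ω)⁻¹) * star U) *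
          (U * Matrix.diagonal (fun i => d i + ω) * star U)
        = U * (Matrix.diagonal (fun i => (d i + ω)⁻¹) * ((star U * U) *
            Matrix.diagonal (fun i => d i + ω))) * star U := by noncomm_ring
      _ = 1 := by
          rw [hUsU, one_mul, Matrix.diagonal_mul_diagonal]
          have : (fun i => (d i + ω)⁻¹ * (d i + ω)) = fun _ : Fin n => (1:ℝ) := by
            funext i
            exact inv_mul_cancel₀ (ne_of_gt (by have := hdpos i; linarith))
          rw [this, Matrix.diagonal_one, mul_one, hUU]
  have hMinv : (A + ω • (1 : Matrix (Fin n) (Fin n) ℝ))⁻¹ =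
      U * Matrix.diagonal (fun i => (d i + ω)⁻¹) * star U :=
    Matrix.inv_eq_left_inv hleft
  have hMinvM : (A + ω • (1 : Matrix (Fin n) (Fin n) ℝ))⁻¹ *
      (A + ω • (1 : Matrix (Fin n) (Fin n) ℝ)) = 1 := by rw [hMinv]; exact hleft
  -- norm bounds
  have hμω : 0 < μmin + ω := by linarith
  have hMinvle : spec (A + ω • (1 : Matrix (Fin n) (Fin n) ℝ))⁻¹ ≤ (μmin + ω)⁻¹ := by
    rw [hMinv]
    apply spec_conj_le hn hU (by positivity)
    intro i
    have h1 : 0 < d i + ω := by have := hdpos i; linarith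
    rw [abs_of_pos (inv_pos.mpr h1)]
    exact inv_anti₀ hμω (by have := hmin i; linarith)
  set r : ℝ := max (ω - μmin) (μmax - ω) with hrdef
  have hr0 : 0 ≤ r := by
    rcases le_total μmin ω with h | h
    · exact le_trans (by linarith) (le_max_left _ _)
    · exact le_trans (by linarith) (le_max_right _ _)
  have hNle : spec (ω • (1 : Matrix (Fin n) (Fin n) ℝ) - A) ≤ r := by
    rw [hN]
    apply spec_conj_le hn hU hr0
    intro i
    have h1 := hmin i; have h2 := hmax i
    rw [abs_le]
    constructor
    · have : μmax - ω ≤ r := le_max_right _ _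
      linarith
    · have : ω - μmin ≤ r := le_max_left _ _
      linarith
  have hrlt : r + 2 * spec B < μmin + ω := by
    have : r < μmin + ω - 2 * spec B := max_lt (by linarith) (by linarith)
    linarith
  have hc1 : spec (A + ω • (1 : Matrix (Fin n) (Fin n) ℝ))⁻¹ *
      (spec (ω • (1 : Matrix (Fin n) (Fin n) ℝ) - A) + 2 * spec B) < 1 := by
    have hNn := spec_nonneg (ω • (1 : Matrix (Fin n) (Fin n) ℝ) - A)
    have step1 : spec (A + ω • (1 : Matrix (Fin n) (Fin n) ℝ))⁻¹ *
        (spec (ω • (1 : Matrix (Fin n) (Fin n) ℝ) - A) + 2 * spec B) ≤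
        (μmin + ω)⁻¹ * (r + 2 * spec B) := by
      apply mul_le_mul hMinvle (by linarith) (by linarith) (by positivity)
    have step2 : (μmin + ω)⁻¹ * (r + 2 * spec B) < 1 := by
      have := mul_lt_mul_of_pos_left hrlt (inv_pos.mpr hμω)
      rwa [inv_mul_cancel₀ (ne_of_gt hμω)] at this
    linarith
  refine ⟨hc1, ?_⟩
  intro xs hxs x hx
  set M : Matrix (Fin n) (Fin n) ℝ := A + ω • (1 : Matrix (Fin n) (Fin n) ℝ) with hMdef
  set N : Matrix (Fin n) (Fin n) ℝ := ω • (1 : Matrix (Fin n) (Fin n) ℝ) - A with hNdef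
  set c : ℝ := spec M⁻¹ * (spec N + 2 * spec B) with hcdef
  have hc0 : 0 ≤ c := by
    apply mul_nonneg (spec_nonneg _)
    have := spec_nonneg N
    linarith
  have hx' : ∀ k, M.mulVec (x (k + 1)) = N.mulVec (x k) +
      (2 : ℝ) • (B.mulVec (vabs (x k)) + b) := by
    intro k
    have := hx k
    rwa [show ω • (1 : Matrix (Fin n) (Fin n) ℝ) + A = M from add_comm _ _] at this
  have hfix : M.mulVec xs = N.mulVec xs + (2 : ℝ) • (B.mulVec (vabs xs) + b) := by
    have hb : b = A.mulVec xs - B.mulVec (vabs xs) := hxs.symm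
    rw [hb, hMdef, hNdef, Matrix.add_mulVec, Matrix.sub_mulVec,
      Matrix.smul_mulVec, Matrix.one_mulVec]
    module
  have herr : ∀ k, M.mulVec (x (k + 1) - xs) =
      N.mulVec (x k - xs) + (2 : ℝ) • (B.mulVec (vabs (x k) - vabs xs)) := by
    intro k
    rw [Matrix.mulVec_sub, hx' k, hfix, Matrix.mulVec_sub, Matrix.mulVec_sub]
    module
  have herec : ∀ k, x (k + 1) - xs =
      M⁻¹.mulVec (N.mulVec (x k - xs) + (2 : ℝ) • (B.mulVec (vabs (x k) - vabs xs))) := by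
    intro k
    rw [← herr k, Matrix.mulVec_mulVec, hMinvM, Matrix.one_mulVec]
  have hbound : ∀ k, enorm2 (x (k + 1) - xs) ≤ c * enorm2 (x k - xs) := by
    intro k
    have hf : enorm2 (vabs (x k) - vabs xs) ≤ enorm2 (x k - xs) := by
      apply enorm2_mono
      intro i
      simp only [Pi.sub_apply, vabs]
      calc |(|x k i| - |xs i|)| ≤ |x k i - xs i| := abs_abs_sub_abs_le_abs_sub _ _
        _ ≤ |x k i - xs i| := le_refl _
    have h1 : enorm2 (N.mulVec (x k - xs)) ≤ spec N * enorm2 (x k - xs) :=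
      enorm2_mulVec_le _ _
    have h2 : enorm2 (B.mulVec (vabs (x k) - vabs xs)) ≤ spec B * enorm2 (x k - xs) :=
      le_trans (enorm2_mulVec_le _ _) (mul_le_mul_of_nonneg_left hf hτ0)
    have h3 : enorm2 (N.mulVec (x k - xs) + (2 : ℝ) • (B.mulVec (vabs (x k) - vabs xs))) ≤
        (spec N + 2 * spec B) * enorm2 (x k - xs) := by
      calc enorm2 (N.mulVec (x k - xs) + (2 : ℝ) • (B.mulVec (vabs (x k) - vabs xs)))
          ≤ enorm2 (N.mulVec (x k - xs)) +
            enorm2 ((2 : ℝ) • (B.mulVec (vabs (x k) - vabs xs))) := enorm2_add_le _ _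
        _ = enorm2 (N.mulVec (x k - xs)) +
            2 * enorm2 (B.mulVec (vabs (x k) - vabs xs)) := by
            rw [enorm2_smul]; norm_num
        _ ≤ spec N * enorm2 (x k - xs) + 2 * (spec B * enorm2 (x k - xs)) := by
            have := h2; linarith
        _ = (spec N + 2 * spec B) * enorm2 (x k - xs) := by ring
    calc enorm2 (x (k + 1) - xs)
        = enorm2 (M⁻¹.mulVec (N.mulVec (x k - xs) +
            (2 : ℝ) • (B.mulVec (vabs (x k) - vabs xs)))) := by rw [← herec k]
      _ ≤ spec M⁻¹ * enorm2 (N.mulVec (x k - xs) +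
            (2 : ℝ) • (B.mulVec (vabs (x k) - vabs xs))) := enorm2_mulVec_le _ _
      _ ≤ spec M⁻¹ * ((spec N + 2 * spec B) * enorm2 (x k - xs)) :=
            mul_le_mul_of_nonneg_left h3 (spec_nonneg _)
      _ = c * enorm2 (x k - xs) := by rw [hcdef]; ring
  refine ⟨⟨c, hc1, hbound⟩, ?_⟩
  have hgeo : ∀ k, enorm2 (x k - xs) ≤ c ^ k * enorm2 (x 0 - xs) := by
    intro k
    induction k with
    | zero => simp
    | succ k ih =>
        calc enorm2 (x (k + 1) - xs) ≤ c * enorm2 (x k - xs) := hbound k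
          _ ≤ c * (c ^ k * enorm2 (x 0 - xs)) := mul_le_mul_of_nonneg_left ih hc0
          _ = c ^ (k + 1) * enorm2 (x 0 - xs) := by ring
  have hlim : Tendsto (fun k => c ^ k * enorm2 (x 0 - xs)) atTop (nhds 0) := by
    have := (tendsto_pow_atTop_nhds_zero_of_lt_one hc0 hc1).mul_const (enorm2 (x 0 - xs))
    simpa using this
  have h0 : Tendsto (fun k => enorm2 (x k - xs)) atTop (nhds 0) :=
    squeeze_zero (fun k => enorm2_nonneg _) hgeo hlim
  have hy : Tendsto (fun k => (WithLp.equiv 2 (Fin n → ℝ)).symm (x k - xs)) atTop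
      (nhds (0 : EuclideanSpace ℝ (Fin n))) :=
    tendsto_zero_iff_norm_tendsto_zero.mpr h0
  have hsub : Tendsto (fun k => x k - xs) atTop (nhds 0) := by
    have hcont := (PiLp.continuous_ofLp 2 (fun _ : Fin n => ℝ)).tendsto
      (0 : EuclideanSpace ℝ (Fin n))
    have := hcont.comp hy
    exact this
  exact tendsto_sub_nhds_zero_iff.mp hsub
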